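/- Let A be a unital C*-algebra, let n ≥ 1, and let a₁, …, aₙ ∈ A be contractions (‖aᵢ‖ ≤ 1 for every i). The following are equivalent: (1) there exist x₁, …, xₙ ∈ A with x₁a₁ + ⋯ + xₙaₙ = 1; (2) a₁*a₁ + ⋯ + aₙ*aₙ is invertible in A; (3) there exist v₁, …, vₙ ∈ A and a positive invertible element c ∈ A with ‖c‖ ≤ √n such that aᵢ = vᵢc for all i and v₁*v₁ + ⋯ + vₙ*vₙ = 1; (4) there exist v₁, …, vₙ ∈ A and a positive invertible element c ∈ A with ‖c‖ ≤ √n such that aᵢ = vᵢc for all i and ‖v₁*v₁ + ⋯ + vₙ*vₙ − 1‖ < 1. -/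

import Mathlib

section Aux
variable {A : Type*} [CStarAlgebra A] [PartialOrder A] [StarOrderedRing A]

/-- Cauchy–Schwarz-type convexity inequality. -/
lemma cs_aux (n : ℕ) (c : Fin n → A) :
    star (∑ i, c i) * (∑ i, c i) ≤ (n : ℝ) • ∑ i, star (c i) * c i := by
  set S := ∑ i, c i with hS
  set T := ∑ i, star (c i) * c i with hT
  have key : (0:A) ≤ ∑ i, ∑ j, star (c i - c j) * (c i - c j) :=
    Finset.sum_nonneg fun i _ => Finset.sum_nonneg fun j _ => star_mul_self_nonneg _
  have h1 : ∀ i j : Fin n, star (c i - c j) * (c i - c j)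
      = star (c i) * c i - star (c i) * c j - star (c j) * c i + star (c j) * c j := by
    intro i j
    rw [star_sub, sub_mul, mul_sub, mul_sub]
    abel
  have A1 : ∑ _i : Fin n, ∑ _j : Fin n, star (c _i) * c _i = n • T := by
    simp [Finset.sum_const, Finset.mul_sum, hT]
  have A2 : ∑ i : Fin n, ∑ j : Fin n, star (c i) * c j = star S * S := by
    simp_rw [← Finset.mul_sum, ← Finset.sum_mul, hS, star_sum]
  have A3 : ∑ i : Fin n, ∑ j : Fin n, star (c j) * c i = star S * S := by
    rw [Finset.sum_comm]
    exact A2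
  have A4 : ∑ _i : Fin n, ∑ j : Fin n, star (c j) * c j = n • T := by
    simp [← hT, Finset.sum_const]
  have expand : ∑ i, ∑ j, star (c i - c j) * (c i - c j)
      = (n • T - star S * S) + (n • T - star S * S) := by
    simp_rw [h1, Finset.sum_add_distrib, Finset.sum_sub_distrib, A1, A2, A3, A4]
    abel
  rw [expand] at key
  have half : (0:A) ≤ n • T - star S * S := by
    have := smul_nonneg (by norm_num : (0:ℝ) ≤ 2⁻¹) key
    rwa [smul_add, ← two_smul ℝ, smul_smul, mul_inv_cancel₀ (by norm_num : (2:ℝ) ≠ 0), one_smul] at this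
  have := sub_nonneg.mp half
  rwa [← Nat.cast_smul_eq_nsmul ℝ n T] at this

lemma imp12 {n : ℕ} (hn : 1 ≤ n) (a x : Fin n → A) (h : ∑ i, x i * a i = 1) :
    IsUnit (∑ i, star (a i) * a i) := by
  set b := ∑ i, star (a i) * a i with hb
  set K : ℝ := 1 + ∑ i, ‖x i‖ ^ 2 with hK
  have hKpos : (0:ℝ) < K := by positivity
  have step1 : (1:A) ≤ (n:ℝ) • ∑ i, star (x i * a i) * (x i * a i) := by
    have := cs_aux n (fun i => x i * a i)
    rwa [h, star_one, one_mul] at this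
  have step2 : ∀ i, star (x i * a i) * (x i * a i) ≤ K • (star (a i) * a i) := by
    intro i
    have h1 : star (x i) * x i ≤ algebraMap ℝ A (‖x i‖ ^ 2) := by
      simpa [sq] using CStarAlgebra.star_mul_le_algebraMap_norm_sq (a := x i)
    have h2 := star_left_conjugate_le_conjugate h1 (a i)
    have h3 : star (a i) * algebraMap ℝ A (‖x i‖ ^ 2) * a i = ‖x i‖ ^ 2 • (star (a i) * a i) := by
      rw [Algebra.algebraMap_eq_smul_one]
      simp [mul_smul_comm, smul_mul_assoc, mul_assoc]
    have h4 : star (x i * a i) * (x i * a i) = star (a i) * (star (x i) * x i) * a i := by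
      simp [star_mul, mul_assoc]
    have h5 : ‖x i‖ ^ 2 • (star (a i) * a i) ≤ K • (star (a i) * a i) := by
      refine smul_le_smul_of_nonneg_right ?_ (star_mul_self_nonneg _)
      have : ‖x i‖ ^ 2 ≤ ∑ j, ‖x j‖ ^ 2 :=
        Finset.single_le_sum (f := fun j => ‖x j‖ ^ 2) (fun j _ => by positivity)
          (Finset.mem_univ i)
      linarith
    rw [h4]
    exact (h2.trans_eq h3).trans h5
  have hsum : ∑ i, star (x i * a i) * (x i * a i) ≤ K • b := by
    calc ∑ i, star (x i * a i) * (x i * a i) ≤ ∑ i, K • (star (a i) * a i) :=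
          Finset.sum_le_sum fun i _ => step2 i
      _ = K • b := (Finset.smul_sum).symm
  have step3 : (1:A) ≤ ((n:ℝ) * K) • b := by
    calc (1:A) ≤ (n:ℝ) • ∑ i, star (x i * a i) * (x i * a i) := step1
      _ ≤ (n:ℝ) • (K • b) := smul_le_smul_of_nonneg_left hsum (Nat.cast_nonneg n)
      _ = ((n:ℝ) * K) • b := smul_smul _ _ _
  have hr : (0:ℝ) < (n:ℝ) * K := by
    have : (1:ℝ) ≤ (n:ℝ) := by exact_mod_cast hn
    nlinarith
  have hle : ((n:ℝ) * K)⁻¹ • (1:A) ≤ b := by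
    have := smul_le_smul_of_nonneg_left step3 (inv_nonneg.mpr hr.le)
    rwa [smul_smul, inv_mul_cancel₀ hr.ne', one_smul] at this
  have hu : IsUnit (((n:ℝ) * K)⁻¹ • (1:A)) := by
    rw [← Algebra.algebraMap_eq_smul_one]
    exact (isUnit_iff_ne_zero.mpr (by positivity)).map (algebraMap ℝ A)
  have hpos : (0:A) ≤ ((n:ℝ) * K)⁻¹ • (1:A) := smul_nonneg (by positivity) zero_le_one
  exact CStarAlgebra.isUnit_of_le _ hle (IsStrictlyPositive.iff_of_unital.mpr ⟨hpos, hu⟩)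

lemma imp23 {n : ℕ} (a : Fin n → A) (ha : ∀ i, ‖a i‖ ≤ 1)
    (hbU : IsUnit (∑ i, star (a i) * a i)) :
    ∃ (v : Fin n → A) (c : A), (∃ y : A, c = star y * y) ∧ IsUnit c ∧
      ‖c‖ ≤ Real.sqrt n ∧ (∀ i, a i = v i * c) ∧ (∑ i, star (v i) * v i) = 1 := by
  set b := ∑ i, star (a i) * a i with hbdef
  have hb0 : (0:A) ≤ b := Finset.sum_nonneg fun i _ => star_mul_self_nonneg _
  set c := CFC.sqrt b with hcdef
  have hc0 : (0:A) ≤ c := CFC.sqrt_nonneg _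
  have hcc : c * c = b := CFC.sqrt_mul_sqrt_self b hb0
  have hcsa : star c = c := (IsSelfAdjoint.of_nonneg hc0).star_eq
  obtain ⟨u, hu⟩ := hbU
  have hbu1 : b * ↑u⁻¹ = 1 := by rw [← hu]; exact u.mul_inv
  have hub1 : (↑u⁻¹ : A) * b = 1 := by rw [← hu]; exact u.inv_mul
  have hcom : Commute c ((u⁻¹ : Aˣ) : A) := by
    refine Commute.units_inv_right ?_
    have : Commute c (c * c) := (Commute.refl c).mul_right (Commute.refl c)
    rwa [hcc, ← hu] at this
  set d := c * ((u⁻¹ : Aˣ) : A) with hddef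
  have hcd : c * d = 1 := by rw [hddef, ← mul_assoc, hcc, hbu1]
  have hdc : d * c = 1 := by
    rw [hddef, hcom.eq, mul_assoc, hcc, hub1]
  have hcu : IsUnit c := ⟨⟨c, d, hcd, hdc⟩, rfl⟩
  have hsd : star d = d := by
    have h1 : star d * c = 1 := by
      conv_lhs => rw [← hcsa, ← star_mul, hcd, star_one]
    calc star d = star d * (c * d) := by rw [hcd, mul_one]
      _ = (star d * c) * d := by rw [mul_assoc]
      _ = d := by rw [h1, one_mul]
  refine ⟨fun i => a i * d, c, ⟨CFC.sqrt c, ?_⟩, hcu, ?_, fun i => ?_, ?_⟩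
  · rw [(IsSelfAdjoint.of_nonneg (CFC.sqrt_nonneg c)).star_eq,
      CFC.sqrt_mul_sqrt_self c hc0]
  · have hno : ‖c‖ * ‖c‖ = ‖b‖ := by
      rw [← CStarRing.norm_star_mul_self (x := c), hcsa, hcc]
    have hbn : ‖b‖ ≤ (n : ℝ) := by
      calc ‖b‖ ≤ ∑ i, ‖star (a i) * a i‖ := norm_sum_le _ _
        _ ≤ ∑ _i : Fin n, (1:ℝ) := by
            refine Finset.sum_le_sum fun i _ => ?_
            calc ‖star (a i) * a i‖ ≤ ‖star (a i)‖ * ‖a i‖ := norm_mul_le _ _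
              _ ≤ 1 * 1 := by
                  rw [norm_star]
                  exact mul_le_mul (ha i) (ha i) (norm_nonneg _) zero_le_one
              _ = 1 := one_mul 1
        _ = (n : ℝ) := by simp
    rw [Real.le_sqrt (norm_nonneg c) (Nat.cast_nonneg n), sq]
    exact hno.le.trans hbn
  · rw [mul_assoc, hdc, mul_one]
  · calc ∑ i, star (a i * d) * (a i * d)
        = ∑ i, star d * (star (a i) * a i) * d := by
          refine Finset.sum_congr rfl fun i _ => ?_
          simp [star_mul, mul_assoc]
      _ = star d * b * d := by rw [← Finset.sum_mul, ← Finset.mul_sum, hbdef]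
      _ = d * (c * c) * d := by rw [hsd, hcc]
      _ = (d * c) * (c * d) := by noncomm_ring
      _ = 1 := by rw [hdc, hcd, one_mul]

lemma imp42 {n : ℕ} (a : Fin n → A)
    (h : ∃ (v : Fin n → A) (c : A), (∃ y : A, c = star y * y) ∧ IsUnit c ∧
      ‖c‖ ≤ Real.sqrt n ∧ (∀ i, a i = v i * c) ∧
      ‖(∑ i, star (v i) * v i) - 1‖ < 1) :
    IsUnit (∑ i, star (a i) * a i) := by
  obtain ⟨v, c, ⟨y, hy⟩, hcU, -, hav, hnorm⟩ := h
  set s := ∑ i, star (v i) * v i with hsdef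
  have hsU : IsUnit s := by
    have h' : ‖1 - s‖ < 1 := by rwa [norm_sub_rev]
    simpa using (Units.oneSub (1 - s) h').isUnit
  have hcsa : star c = c := by rw [hy]; simp [star_mul]
  have key : ∑ i, star (a i) * a i = star c * s * c := by
    calc ∑ i, star (a i) * a i = ∑ i, star c * (star (v i) * v i) * c := by
          refine Finset.sum_congr rfl fun i _ => ?_
          rw [hav i]
          simp [star_mul, mul_assoc]
      _ = star c * s * c := by rw [← Finset.sum_mul, ← Finset.mul_sum, hsdef]
  rw [key, hcsa]
  exact (hcU.mul hsU).mul hcU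

end Aux

/-- Lemma on generating tuples in a unital C*-algebra (stable rank characterization). -/
theorem stmt_0 {A : Type*} [CStarAlgebra A] (n : ℕ) (hn : 1 ≤ n)
    (a : Fin n → A) (ha : ∀ i, ‖a i‖ ≤ 1) :
    [ (∃ x : Fin n → A, ∑ i, x i * a i = 1),
      IsUnit (∑ i, star (a i) * a i),
      (∃ (v : Fin n → A) (c : A), (∃ y : A, c = star y * y) ∧ IsUnit c ∧
        ‖c‖ ≤ Real.sqrt n ∧ (∀ i, a i = v i * c) ∧ (∑ i, star (v i) * v i) = 1),
      (∃ (v : Fin n → A) (c : A), (∃ y : A, c = star y * y) ∧ IsUnit c ∧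
        ‖c‖ ≤ Real.sqrt n ∧ (∀ i, a i = v i * c) ∧
        ‖(∑ i, star (v i) * v i) - 1‖ < 1) ].TFAE := by
  letI := CStarAlgebra.spectralOrder A
  haveI := CStarAlgebra.spectralOrderedRing A
  tfae_have 1 → 2 := fun ⟨x, hx⟩ => imp12 hn a x hx
  tfae_have 2 → 1 := by
    intro h
    refine ⟨fun i => ↑h.unit⁻¹ * star (a i), ?_⟩
    simp_rw [mul_assoc, ← Finset.mul_sum]
    nth_rewrite 2 [← h.unit_spec]
    exact h.unit.inv_mul
  tfae_have 2 → 3 := imp23 a ha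
  tfae_have 3 → 4 := by
    rintro ⟨v, c, hy, hc, hn', hav, hsum⟩
    exact ⟨v, c, hy, hc, hn', hav, by rw [hsum]; simp⟩
  tfae_have 4 → 2 := imp42 a
  tfae_finish
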